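/- Let p be a prime, α ≥ 2 and m ≥ 1 integers with p ∤ m, and set N = p^α · m. Suppose the set {1, 2, …, k} splits ℤ_N with splitter set S. For an integer i ≥ 0, let S_i = {s ∈ S : p^i divides the additive order of s but p^{i+1} does not}. Then (k − ⌊k/p⌋) · |S_{α−1}| + (⌊k/p⌋ − ⌊k/p²⌋) · |S_α| = p^{α−2} · (p − 1) · m. -/

import Mathlib

/-- `S ⊆ G` is a splitter set for the multiplier set `{1, 2, …, k}` in the finite
abelian group `G`: every nonzero `g ∈ G` has a unique representation `g = m • s`
with `m ∈ {1, …, k}` and `s ∈ S`. -/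
def IsSplitting {G : Type*} [AddCommGroup G] (k : ℕ) (S : Set G) : Prop :=
  ∀ g : G, g ≠ 0 → ∃! ms : ℤ × G,
    ms.1 ∈ Set.Icc (1 : ℤ) (k : ℤ) ∧ ms.2 ∈ S ∧ ms.1 • ms.2 = g

/-- `S` is a splitter set for `{1, …, k}` in `G`, and the splitting is purely
singular: every prime divisor of `|G|` divides some multiplier `m ∈ {1, …, k}`. -/
def IsPurelySingularSplitting {G : Type*} [AddCommGroup G] (k : ℕ) (S : Set G) : Prop :=
  IsSplitting k S ∧
    ∀ q : ℕ, q.Prime → q ∣ Nat.card G →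
      ∃ m : ℤ, m ∈ Set.Icc (1 : ℤ) (k : ℤ) ∧ (q : ℤ) ∣ m

lemma key_val (p α o j : ℕ) (hp : p.Prime) (hα : 2 ≤ α) (ho : o ≠ 0) (hj : j ≠ 0)
    (ha : o.factorization p ≤ α) :
    (p ^ (α - 1) ∣ o / Nat.gcd o j ∧ ¬ p ^ α ∣ o / Nat.gcd o j) ↔
      ((¬ p ∣ j) ∧ (p ^ (α - 1) ∣ o ∧ ¬ p ^ α ∣ o)) ∨
        ((p ∣ j ∧ ¬ p ^ 2 ∣ j) ∧ (p ^ α ∣ o ∧ ¬ p ^ (α + 1) ∣ o)) := by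
  have hg : Nat.gcd o j ∣ o := Nat.gcd_dvd_left o j
  have hg0 : Nat.gcd o j ≠ 0 := Nat.gcd_ne_zero_left ho
  have hq0 : o / Nat.gcd o j ≠ 0 := by
    have := Nat.div_pos (Nat.le_of_dvd (Nat.pos_of_ne_zero ho) hg) (Nat.pos_of_ne_zero hg0)
    omega
  have hfq : (o / Nat.gcd o j).factorization p
      = o.factorization p - min (o.factorization p) (j.factorization p) := by
    rw [Nat.factorization_div hg, Finsupp.tsub_apply, Nat.factorization_gcd ho hj]
    simp [Finsupp.inf_apply]
  have hpj : p ∣ j ↔ p ^ 1 ∣ j := by rw [pow_one]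
  simp only [hpj, hp.pow_dvd_iff_le_factorization hq0, hp.pow_dvd_iff_le_factorization ho,
    hp.pow_dvd_iff_le_factorization hj, hfq]
  omega

lemma divisors_filter_eq (p α m : ℕ) (hp : p.Prime) (hα : 2 ≤ α) (hm : 1 ≤ m)
    (hpm : ¬ p ∣ m) :
    (p ^ α * m).divisors.filter (fun e => p ^ (α - 1) ∣ e ∧ ¬ p ^ α ∣ e)
      = m.divisors.image (fun t => p ^ (α - 1) * t) := by
  have hp0 : 0 < p ^ (α - 1) := pow_pos hp.pos _
  have hm0 : m ≠ 0 := by omega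
  have hN0 : p ^ α * m ≠ 0 := Nat.mul_ne_zero (pow_ne_zero _ hp.pos.ne') hm0
  have hsplit : p ^ α = p ^ (α - 1) * p := by
    rw [← pow_succ]; congr 1; omega
  ext e
  simp only [Finset.mem_filter, Nat.mem_divisors, Finset.mem_image]
  constructor
  · rintro ⟨⟨heN, -⟩, ⟨t, ht⟩, hnd⟩
    refine ⟨t, ⟨?_, hm0⟩, ht.symm⟩
    have htpm : t ∣ p * m := by
      rw [← Nat.mul_dvd_mul_iff_left hp0, ← ht]
      calc e ∣ p ^ α * m := heN
        _ = p ^ (α - 1) * (p * m) := by rw [hsplit]; ring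
    have hpt : ¬ p ∣ t := by
      intro hpt
      exact hnd (by rw [ht, hsplit]; exact mul_dvd_mul_left _ hpt)
    exact ((Nat.Prime.coprime_iff_not_dvd hp).mpr hpt).symm.dvd_of_dvd_mul_left htpm
  · rintro ⟨t, ⟨htm, -⟩, rfl⟩
    refine ⟨⟨?_, hN0⟩, Dvd.intro t rfl, ?_⟩
    · rw [hsplit, mul_assoc]
      exact mul_dvd_mul_left _ (Dvd.dvd.mul_left htm p)
    · intro hd
      rw [hsplit] at hd
      have : p ∣ t := (mul_dvd_mul_iff_left (a := p ^ (α - 1)) (by positivity)).mp hd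
      exact hpm (this.trans htm)

lemma count_T (p α m : ℕ) (hp : p.Prime) (hα : 2 ≤ α) (hm : 1 ≤ m) (hpm : ¬ p ∣ m) :
    ∑ e ∈ (p ^ α * m).divisors.filter (fun e => p ^ (α - 1) ∣ e ∧ ¬ p ^ α ∣ e),
        Nat.totient e = p ^ (α - 2) * (p - 1) * m := by
  rw [divisors_filter_eq p α m hp hα hm hpm, Finset.sum_image
    (fun a _ b _ hab => by exact Nat.eq_of_mul_eq_mul_left (pow_pos hp.pos _) hab)]
  have : ∀ t ∈ m.divisors, Nat.totient (p ^ (α - 1) * t)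
      = (p ^ (α - 2) * (p - 1)) * Nat.totient t := by
    intro t ht
    have htm := (Nat.mem_divisors.mp ht).1
    have hpt : ¬ p ∣ t := fun h => hpm (h.trans htm)
    have hco : Nat.Coprime (p ^ (α - 1)) t :=
      Nat.Coprime.pow_left _ ((Nat.Prime.coprime_iff_not_dvd hp).mpr hpt)
    rw [Nat.totient_mul hco, Nat.totient_prime_pow hp (by omega),
      show α - 1 - 1 = α - 2 from by omega]
  rw [Finset.sum_congr rfl this, ← Finset.mul_sum, Nat.sum_totient]

lemma card_T (p α m N : ℕ) (hp : p.Prime) (hα : 2 ≤ α) (hm : 1 ≤ m) (hpm : ¬ p ∣ m)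
    (hN : N = p ^ α * m) [NeZero N] :
    (Finset.univ.filter
        (fun x : ZMod N => p ^ (α - 1) ∣ addOrderOf x ∧ ¬ p ^ α ∣ addOrderOf x)).card
      = p ^ (α - 2) * (p - 1) * m := by
  classical
  have hN0 : N ≠ 0 := NeZero.ne N
  have hmem : ∀ x ∈ Finset.univ.filter
      (fun x : ZMod N => p ^ (α - 1) ∣ addOrderOf x ∧ ¬ p ^ α ∣ addOrderOf x),
      addOrderOf x ∈ N.divisors.filter (fun e => p ^ (α - 1) ∣ e ∧ ¬ p ^ α ∣ e) := by
    intro x hx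
    rw [Finset.mem_filter] at hx ⊢
    refine ⟨Nat.mem_divisors.mpr ⟨?_, hN0⟩, hx.2⟩
    have := addOrderOf_dvd_card (x := x)
    rwa [ZMod.card] at this
  rw [Finset.card_eq_sum_card_fiberwise hmem]
  have hfiber : ∀ e ∈ N.divisors.filter (fun e => p ^ (α - 1) ∣ e ∧ ¬ p ^ α ∣ e),
      ((Finset.univ.filter
        (fun x : ZMod N => p ^ (α - 1) ∣ addOrderOf x ∧ ¬ p ^ α ∣ addOrderOf x)).filter
          (fun x => addOrderOf x = e)).card = Nat.totient e := by
    intro e he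
    rw [Finset.mem_filter, Nat.mem_divisors] at he
    have heq : (Finset.univ.filter
        (fun x : ZMod N => p ^ (α - 1) ∣ addOrderOf x ∧ ¬ p ^ α ∣ addOrderOf x)).filter
          (fun x => addOrderOf x = e)
        = Finset.univ.filter (fun x : ZMod N => addOrderOf x = e) := by
      ext x
      simp only [Finset.mem_filter, Finset.mem_univ, true_and]
      constructor
      · rintro ⟨-, h⟩; exact h
      · intro hx
        exact ⟨by rw [hx]; exact he.2, hx⟩
    rw [heq]
    exact IsAddCyclic.card_addOrderOf_eq_totient (by rw [ZMod.card]; exact he.1.1)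
  rw [Finset.sum_congr rfl hfiber]
  subst hN
  exact count_T p α m hp hα hm hpm

/-- Counting the elements `x` with `p^{α−1} ∥ ord(x)` in a splitting of `ℤ_{p^α m}`:
`(k − ⌊k/p⌋)·|S_{α−1}| + (⌊k/p⌋ − ⌊k/p²⌋)·|S_α| = p^{α−2}(p−1)m`. -/
theorem splitting_count_order_exactly_p_alpha_sub_one
    (p α m k N : ℕ) (hp : p.Prime) (hα : 2 ≤ α) (hm : 1 ≤ m)
    (hpm : ¬ p ∣ m) (hN : N = p ^ α * m)
    (S : Finset (ZMod N)) (h : IsSplitting k (S : Set (ZMod N))) :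
    (k - k / p) *
        (S.filter (fun s => p ^ (α - 1) ∣ addOrderOf s ∧ ¬ p ^ (α - 1 + 1) ∣ addOrderOf s)).card
      + (k / p - k / p ^ 2) *
          (S.filter (fun s => p ^ α ∣ addOrderOf s ∧ ¬ p ^ (α + 1) ∣ addOrderOf s)).card
      = p ^ (α - 2) * (p - 1) * m := by
  classical
  have hm0 : m ≠ 0 := by omega
  have hN0 : N ≠ 0 := by
    rw [hN]; exact Nat.mul_ne_zero (pow_ne_zero _ hp.pos.ne') hm0
  haveI : NeZero N := ⟨hN0⟩
  have hα1 : α - 1 + 1 = α := by omega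
  simp only [hα1]
  -- abbreviations
  set S1 : Finset (ZMod N) :=
    S.filter (fun s => p ^ (α - 1) ∣ addOrderOf s ∧ ¬ p ^ α ∣ addOrderOf s) with hS1
  set S2 : Finset (ZMod N) :=
    S.filter (fun s => p ^ α ∣ addOrderOf s ∧ ¬ p ^ (α + 1) ∣ addOrderOf s) with hS2
  set A1 : Finset ℕ := (Finset.Ioc 0 k).filter (fun j => ¬ p ∣ j) with hA1def
  set A2 : Finset ℕ := (Finset.Ioc 0 k).filter (fun j => p ∣ j ∧ ¬ p ^ 2 ∣ j) with hA2def
  set T : Finset (ZMod N) := Finset.univ.filter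
    (fun x : ZMod N => p ^ (α - 1) ∣ addOrderOf x ∧ ¬ p ^ α ∣ addOrderOf x) with hTdef
  -- cardinalities of multiplier sets
  have hA1card : A1.card = k - k / p := by
    have heq : A1 = Finset.Ioc 0 k \ (Finset.Ioc 0 k).filter (fun j => p ∣ j) := by
      ext j
      simp only [hA1def, Finset.mem_filter, Finset.mem_sdiff]
      tauto
    rw [heq, Finset.card_sdiff_of_subset (Finset.filter_subset _ _), Nat.Ioc_filter_dvd_card_eq_div,
      Nat.card_Ioc]
    omega
  have hA2card : A2.card = k / p - k / p ^ 2 := by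
    have hsub : (Finset.Ioc 0 k).filter (fun j => p ^ 2 ∣ j)
        ⊆ (Finset.Ioc 0 k).filter (fun j => p ∣ j) := by
      intro j hj
      rw [Finset.mem_filter] at hj ⊢
      exact ⟨hj.1, (dvd_pow_self p two_ne_zero).trans hj.2⟩
    have heq : A2 = (Finset.Ioc 0 k).filter (fun j => p ∣ j)
        \ (Finset.Ioc 0 k).filter (fun j => p ^ 2 ∣ j) := by
      ext j
      simp only [hA2def, Finset.mem_filter, Finset.mem_sdiff]
      tauto
    rw [heq, Finset.card_sdiff_of_subset hsub, Nat.Ioc_filter_dvd_card_eq_div,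
      Nat.Ioc_filter_dvd_card_eq_div]
  -- order valuation facts
  have hordN : ∀ x : ZMod N, addOrderOf x ∣ N := by
    intro x
    have := addOrderOf_dvd_card (x := x)
    rwa [ZMod.card] at this
  have hfactN : N.factorization p = α := by
    rw [hN, Nat.factorization_mul (pow_ne_zero _ hp.pos.ne') hm0]
    simp [hp.factorization_pow, Nat.factorization_eq_zero_of_not_dvd hpm]
  have hfact : ∀ x : ZMod N, (addOrderOf x).factorization p ≤ α := by
    intro x
    have hx0 : addOrderOf x ≠ 0 := (addOrderOf_pos x).ne'
    have := (Nat.factorization_le_iff_dvd hx0 hN0).mpr (hordN x)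
    rw [← hfactN]
    exact Finsupp.le_def.mp this p
  have horder : ∀ (j : ℕ), j ≠ 0 → ∀ s : ZMod N,
      ((p ^ (α - 1) ∣ addOrderOf (j • s) ∧ ¬ p ^ α ∣ addOrderOf (j • s)) ↔
        ((¬ p ∣ j) ∧ (p ^ (α - 1) ∣ addOrderOf s ∧ ¬ p ^ α ∣ addOrderOf s)) ∨
          ((p ∣ j ∧ ¬ p ^ 2 ∣ j) ∧ (p ^ α ∣ addOrderOf s ∧ ¬ p ^ (α + 1) ∣ addOrderOf s))) := by
    intro j hj s
    rw [addOrderOf_nsmul]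
    exact key_val p α (addOrderOf s) j hp hα (addOrderOf_pos s).ne' hj (hfact s)
  have hT0 : ∀ x ∈ T, x ≠ 0 := by
    intro x hx
    rintro rfl
    rw [hTdef, Finset.mem_filter] at hx
    have h1 : p ^ (α - 1) ∣ 1 := by simpa using hx.2.1
    have h2 : 2 ≤ p ^ (α - 1) := by
      calc 2 ≤ p := hp.two_le
        _ ≤ p ^ (α - 1) := Nat.le_self_pow (by omega) p
    have := Nat.le_of_dvd one_pos h1
    omega
  -- the bijection
  have hBmem : ∀ js : ℕ × ZMod N, js ∈ A1 ×ˢ S1 ∪ A2 ×ˢ S2 →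
      js.1 ∈ Finset.Ioc 0 k ∧ js.2 ∈ S ∧ js.1 • js.2 ∈ T := by
    rintro ⟨j, s⟩ hjs
    rw [Finset.mem_union, Finset.mem_product, Finset.mem_product] at hjs
    rw [hTdef, Finset.mem_filter]
    rcases hjs with ⟨hj, hs⟩ | ⟨hj, hs⟩
    · rw [hA1def, Finset.mem_filter] at hj
      rw [hS1, Finset.mem_filter] at hs
      have hj0 : j ≠ 0 := by
        have := Finset.mem_Ioc.mp hj.1; omega
      exact ⟨hj.1, hs.1, Finset.mem_univ _,
        (horder j hj0 s).mpr (Or.inl ⟨hj.2, hs.2⟩)⟩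
    · rw [hA2def, Finset.mem_filter] at hj
      rw [hS2, Finset.mem_filter] at hs
      have hj0 : j ≠ 0 := by
        have := Finset.mem_Ioc.mp hj.1; omega
      exact ⟨hj.1, hs.1, Finset.mem_univ _,
        (horder j hj0 s).mpr (Or.inr ⟨hj.2, hs.2⟩)⟩
  have hbij : (A1 ×ˢ S1 ∪ A2 ×ˢ S2).card = T.card := by
    apply Finset.card_nbij (fun js => js.1 • js.2)
    · intro js hjs
      exact (hBmem js hjs).2.2
    · rintro ⟨j, s⟩ hjs ⟨j', s'⟩ hjs' heq
      simp only [Finset.coe_union, Set.mem_union, Finset.mem_coe] at hjs hjs'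
      have h1 := hBmem (j, s) (by rw [Finset.mem_union]; tauto)
      have h2 := hBmem (j', s') (by rw [Finset.mem_union]; tauto)
      simp only at heq h1 h2
      have hx0 : j • s ≠ 0 := hT0 _ h1.2.2
      obtain ⟨u, -, huniq⟩ := h (j • s) hx0
      have e1 : ((j : ℤ), s) = u := by
        apply huniq
        refine ⟨?_, h1.2.1, by rw [natCast_zsmul]⟩
        have := Finset.mem_Ioc.mp h1.1
        simp only [Set.mem_Icc]
        omega
      have e2 : ((j' : ℤ), s') = u := by
        apply huniq
        refine ⟨?_, h2.2.1, by rw [natCast_zsmul, heq]⟩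
        have := Finset.mem_Ioc.mp h2.1
        simp only [Set.mem_Icc]
        omega
      have : ((j : ℤ), s) = ((j' : ℤ), s') := e1.trans e2.symm
      have hj : (j : ℤ) = (j' : ℤ) := congrArg Prod.fst this
      have hs : s = s' := congrArg Prod.snd this
      exact Prod.ext (by exact_mod_cast hj) hs
    · intro x hx
      rw [Finset.mem_coe] at hx
      have hx0 : x ≠ 0 := hT0 x hx
      obtain ⟨⟨c, s⟩, ⟨hc, hsS, hcs⟩, -⟩ := h x hx0
      rw [Set.mem_Icc] at hc
      set j : ℕ := c.toNat with hjdef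
      have hcj : (j : ℤ) = c := Int.toNat_of_nonneg (by omega)
      have hjIoc : j ∈ Finset.Ioc 0 k := by
        rw [Finset.mem_Ioc]; omega
      have hjs : j • s = x := by
        rw [← natCast_zsmul, hcj]; exact hcs
      have hj0 : j ≠ 0 := by
        have := Finset.mem_Ioc.mp hjIoc; omega
      rw [hTdef, Finset.mem_filter] at hx
      rw [← hjs] at hx
      have := (horder j hj0 s).mp hx.2
      refine ⟨(j, s), ?_, hjs⟩
      rw [Finset.mem_coe, Finset.mem_union, Finset.mem_product, Finset.mem_product]
      rcases this with ⟨hjc, hsc⟩ | ⟨hjc, hsc⟩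
      · exact Or.inl ⟨by rw [hA1def, Finset.mem_filter]; exact ⟨hjIoc, hjc⟩,
          by rw [hS1, Finset.mem_filter]; exact ⟨hsS, hsc⟩⟩
      · exact Or.inr ⟨by rw [hA2def, Finset.mem_filter]; exact ⟨hjIoc, hjc⟩,
          by rw [hS2, Finset.mem_filter]; exact ⟨hsS, hsc⟩⟩
  have hdisj : Disjoint (A1 ×ˢ S1) (A2 ×ˢ S2) := by
    rw [Finset.disjoint_left]
    rintro ⟨j, s⟩ h1 h2
    rw [Finset.mem_product, hA1def, Finset.mem_filter] at h1
    rw [Finset.mem_product, hA2def, Finset.mem_filter] at h2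
    exact h1.1.2 h2.1.2.1
  have hcards : (A1 ×ˢ S1 ∪ A2 ×ˢ S2).card = A1.card * S1.card + A2.card * S2.card := by
    rw [Finset.card_union_of_disjoint hdisj, Finset.card_product, Finset.card_product]
  calc (k - k / p) * S1.card + (k / p - k / p ^ 2) * S2.card
      = A1.card * S1.card + A2.card * S2.card := by rw [hA1card, hA2card]
    _ = T.card := by rw [← hcards, hbij]
    _ = p ^ (α - 2) * (p - 1) * m := card_T p α m N hp hα hm hpm hN
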